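/- Let K be a continuous solution of the integral equation K(x,y) + F(x,y) + ∫₀ˣ K(x,t)·F(t,y) dt = 0 on the triangle {(x,y) : 0 ≤ y ≤ x ≤ π}, and define ψ_n(x) := φ_n(x) + ∫₀ˣ K(x,t)·φ_n(t) dt. Then for all 0 ≤ t ≤ x ≤ π one has the kernel representation K(x,t) = −Σ_n c_n·ψ_n(x)·φ_n(t)ᵀ, and consequently for every l, ψ_l(x) = φ_l(x) − Σ_n c_n·ψ_n(x)·∫₀ˣ ⟨φ_n(t), φ_l(t)⟩ dt for all x ∈ [0,π]. -/

import Mathlib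

open Matrix MeasureTheory Set Filter

attribute [local instance] Matrix.normedAddCommGroup Matrix.normedSpace

section helpers
variable {N : ℕ}

lemma myMul_vecMulVec (M : Matrix (Fin N) (Fin N) ℝ) (a b : Fin N → ℝ) :
    M * Matrix.vecMulVec a b = Matrix.vecMulVec (M *ᵥ a) b := by
  ext i j
  simp [Matrix.mul_apply, Matrix.vecMulVec_apply, Matrix.mulVec, dotProduct,
    Finset.sum_mul, mul_assoc]

lemma myAdd_vecMulVec (a a' b : Fin N → ℝ) :
    Matrix.vecMulVec (a + a') b = Matrix.vecMulVec a b + Matrix.vecMulVec a' b := by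
  ext i j
  simp [Matrix.vecMulVec_apply, add_mul]

lemma mySmul_vecMulVec (r : ℝ) (a b : Fin N → ℝ) :
    r • Matrix.vecMulVec a b = Matrix.vecMulVec (r • a) b := by
  ext i j
  simp [Matrix.vecMulVec_apply, mul_assoc]

lemma myVecMulVec_mulVec (a b v : Fin N → ℝ) :
    Matrix.vecMulVec a b *ᵥ v = (b ⬝ᵥ v) • a := by
  ext i
  simp [Matrix.mulVec, dotProduct, Matrix.vecMulVec_apply, Finset.mul_sum,
    Finset.sum_mul, mul_assoc, mul_comm, mul_left_comm]

lemma myNorm_mul_le (A B : Matrix (Fin N) (Fin N) ℝ) :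
    ‖A * B‖ ≤ N * ‖A‖ * ‖B‖ := by
  have hC : (0:ℝ) ≤ N * ‖A‖ * ‖B‖ := by positivity
  rw [Matrix.norm_def, pi_norm_le_iff_of_nonneg hC]
  intro i
  rw [pi_norm_le_iff_of_nonneg hC]
  intro j
  calc ‖(A * B) i j‖ = |∑ k, A i k * B k j| := by rw [Matrix.mul_apply]; rfl
    _ ≤ ∑ k, |A i k * B k j| := Finset.abs_sum_le_sum_abs _ _
    _ ≤ ∑ _k : Fin N, ‖A‖ * ‖B‖ := by
        refine Finset.sum_le_sum fun k _ => ?_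
        rw [abs_mul]
        exact mul_le_mul (A.norm_entry_le_entrywise_sup_norm)
          (B.norm_entry_le_entrywise_sup_norm) (abs_nonneg _) (norm_nonneg _)
    _ = N * ‖A‖ * ‖B‖ := by simp [mul_assoc]

lemma myNorm_mulVec_le (A : Matrix (Fin N) (Fin N) ℝ) (v : Fin N → ℝ) :
    ‖A *ᵥ v‖ ≤ N * ‖A‖ * ‖v‖ := by
  have hC : (0:ℝ) ≤ N * ‖A‖ * ‖v‖ := by positivity
  rw [pi_norm_le_iff_of_nonneg hC]
  intro i
  calc ‖(A *ᵥ v) i‖ = |∑ k, A i k * v k| := rfl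
    _ ≤ ∑ k, |A i k * v k| := Finset.abs_sum_le_sum_abs _ _
    _ ≤ ∑ _k : Fin N, ‖A‖ * ‖v‖ := by
        refine Finset.sum_le_sum fun k _ => ?_
        rw [abs_mul]
        exact mul_le_mul (A.norm_entry_le_entrywise_sup_norm)
          (norm_le_pi_norm v k) (abs_nonneg _) (norm_nonneg _)
    _ = N * ‖A‖ * ‖v‖ := by simp [mul_assoc]

/-- The continuous linear map `v ↦ vecMulVec v b`. -/
noncomputable def vmvCLM (b : Fin N → ℝ) :
    (Fin N → ℝ) →L[ℝ] Matrix (Fin N) (Fin N) ℝ :=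
  LinearMap.toContinuousLinearMap
    { toFun := fun v => Matrix.vecMulVec v b
      map_add' := fun a a' => myAdd_vecMulVec a a' b
      map_smul' := fun r a => by simp [← mySmul_vecMulVec] }

lemma myContinuousOn_mulVec {S : Set ℝ} {M : ℝ → Matrix (Fin N) (Fin N) ℝ}
    {v : ℝ → Fin N → ℝ} (hM : ContinuousOn M S) (hv : ContinuousOn v S) :
    ContinuousOn (fun u => M u *ᵥ v u) S := by
  rw [continuousOn_pi]
  intro i
  simp only [Matrix.mulVec, dotProduct]
  refine continuousOn_finset_sum _ fun k _ => ContinuousOn.mul ?_ ?_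
  · exact ((continuous_apply k).comp (continuous_apply i)).comp_continuousOn hM
  · exact (continuous_apply k).comp_continuousOn hv

lemma myTendsto_intervalIntegral {ι E : Type*} [NormedAddCommGroup E] [NormedSpace ℝ E]
    {l : Filter ι} {f : ι → ℝ → E} {g : ℝ → E} {a b : ℝ} (hab : a ≤ b)
    (hfi : ∀ i, IntervalIntegrable (f i) MeasureTheory.volume a b)
    (hgi : IntervalIntegrable g MeasureTheory.volume a b)
    (hunif : TendstoUniformlyOn f g l (Set.Icc a b)) :
    Tendsto (fun i => ∫ t in a..b, f i t) l (nhds (∫ t in a..b, g t)) := by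
  rw [Metric.tendsto_nhds]
  intro ε hε
  have hδ : 0 < ε / (b - a + 1) := by
    apply div_pos hε; linarith
  filter_upwards [Metric.tendstoUniformlyOn_iff.mp hunif (ε / (b - a + 1)) hδ] with i hi
  have h1 : dist (∫ t in a..b, f i t) (∫ t in a..b, g t)
      = ‖∫ t in a..b, (f i t - g t)‖ := by
    rw [dist_eq_norm, ← intervalIntegral.integral_sub (hfi i) hgi]
  rw [h1]
  have h2 : ‖∫ t in a..b, (f i t - g t)‖ ≤ (ε / (b - a + 1)) * |b - a| := by
    apply intervalIntegral.norm_integral_le_of_norm_le_const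
    intro u hu
    rw [Set.uIoc_of_le hab] at hu
    have := hi u ⟨le_of_lt hu.1, hu.2⟩
    rw [dist_eq_norm, norm_sub_rev] at this
    exact this.le
  refine lt_of_le_of_lt h2 ?_
  rw [abs_of_nonneg (by linarith)]
  rw [div_mul_eq_mul_div, div_lt_iff₀ (by linarith)]
  nlinarith

end helpers

section helpers2
variable {N : ℕ}

lemma myTUO_mulVec {ι : Type*} {l : Filter ι} {S : Set ℝ}
    {Gf : ι → ℝ → Matrix (Fin N) (Fin N) ℝ} {Ff : ℝ → Matrix (Fin N) (Fin N) ℝ}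
    {v : ℝ → Fin N → ℝ} {C : ℝ} (hC0 : 0 ≤ C) (hC : ∀ t ∈ S, ‖v t‖ ≤ C)
    (h : TendstoUniformlyOn Gf Ff l S) :
    TendstoUniformlyOn (fun i t => Gf i t *ᵥ v t) (fun t => Ff t *ᵥ v t) l S := by
  replace h := Metric.tendstoUniformlyOn_iff.mp h; rw [Metric.tendstoUniformlyOn_iff]
  intro ε hε
  have hδ : 0 < ε / (N * C + 1) := by positivity
  filter_upwards [h _ hδ] with i hi t ht
  have h1 := hi t ht
  rw [dist_eq_norm] at h1 ⊢
  have h2 : Ff t *ᵥ v t - Gf i t *ᵥ v t = (Ff t - Gf i t) *ᵥ v t := by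
    rw [Matrix.sub_mulVec]
  rw [h2]
  calc ‖(Ff t - Gf i t) *ᵥ v t‖ ≤ N * ‖Ff t - Gf i t‖ * ‖v t‖ := myNorm_mulVec_le _ _
    _ ≤ N * ‖Ff t - Gf i t‖ * C := by
        refine mul_le_mul_of_nonneg_left (hC t ht) (by positivity)
    _ < ε := by
        have hD : (0:ℝ) ≤ (N:ℝ) * C := by positivity
        have h5 : (N:ℝ) * ‖Ff t - Gf i t‖ * C = ‖Ff t - Gf i t‖ * ((N:ℝ) * C) := by ring
        rw [h5]
        calc ‖Ff t - Gf i t‖ * ((N:ℝ) * C) ≤ (ε / ((N:ℝ) * C + 1)) * ((N:ℝ) * C) :=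
              mul_le_mul_of_nonneg_right h1.le hD
          _ < (ε / ((N:ℝ) * C + 1)) * ((N:ℝ) * C + 1) := by
              have := mul_lt_mul_of_pos_left (show (N:ℝ)*C < (N:ℝ)*C + 1 by linarith) hδ
              linarith [this]
          _ = ε := div_mul_cancel₀ _ (by positivity)

end helpers2

lemma mySum_mulVec {N : ℕ} {ι : Type*} (s : Finset ι) (M : ι → Matrix (Fin N) (Fin N) ℝ)
    (v : Fin N → ℝ) : (∑ n ∈ s, M n) *ᵥ v = ∑ n ∈ s, M n *ᵥ v := by
  ext i
  simp [Matrix.mulVec, dotProduct, Matrix.sum_apply, Finset.sum_mul]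
  rw [Finset.sum_comm]

set_option maxHeartbeats 2000000 in
/-- For a continuous solution `K` of the integral equation and
`ψ n x := φ n x + ∫₀ˣ K(x,t)·φ n t dt`, one has the kernel representation
`K(x,t) = -∑ n, c n • ψ n x ⬝ (φ n t)ᵀ` on the triangle, and consequently
`ψ l x = φ l x - ∑ n, (c n ∫₀ˣ⟨φ n, φ l⟩) • ψ n x`. -/
theorem kernel_representation
    (N : ℕ) (hN : 1 ≤ N)
    (P : ℝ → Matrix (Fin N) (Fin N) ℝ) (A B 𝒜 ℬ : Matrix (Fin N) (Fin N) ℝ)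
    (hP : ContinuousOn P (Set.Icc 0 Real.pi))
    (hPsymm : ∀ x ∈ Set.Icc (0:ℝ) Real.pi, (P x)ᵀ = P x)
    (hAB : B * Aᵀ = A * Bᵀ) (hAB' : ℬ * 𝒜ᵀ = 𝒜 * ℬᵀ)
    (hrkAB : (Matrix.fromCols A B).rank = N)
    (hrkAB' : (Matrix.fromCols 𝒜 ℬ).rank = N)
    -- `(φ n)` is an L²-orthogonal, complete system of eigenfunctions with eigenvalues `ev n`
    (φ : ℕ → ℝ → (Fin N → ℝ)) (ev : ℕ → ℝ) (c : ℕ → ℝ)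
    (hφC : ∀ n, ContDiff ℝ 2 (φ n))
    (hφne : ∀ n, ∃ x ∈ Set.Icc (0:ℝ) Real.pi, φ n x ≠ 0)
    (hφeq : ∀ n, ∀ x ∈ Set.Icc (0:ℝ) Real.pi,
      -(deriv (deriv (φ n)) x) + P x *ᵥ φ n x = ev n • φ n x)
    (hφbc0 : ∀ n, B *ᵥ deriv (φ n) 0 + A *ᵥ φ n 0 = 0)
    (hφbcπ : ∀ n, ℬ *ᵥ deriv (φ n) Real.pi + 𝒜 *ᵥ φ n Real.pi = 0)
    (horth : ∀ m n : ℕ, m ≠ n → ∫ x in (0:ℝ)..Real.pi, φ m x ⬝ᵥ φ n x = 0)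
    (htotal : ∀ f : ℝ → Fin N → ℝ, ContinuousOn f (Set.Icc 0 Real.pi) →
      (∀ n, ∫ x in (0:ℝ)..Real.pi, f x ⬝ᵥ φ n x = 0) →
      ∀ x ∈ Set.Icc (0:ℝ) Real.pi, f x = 0)
    (hc : ∀ n, 0 < 1 + c n * ∫ x in (0:ℝ)..Real.pi, φ n x ⬝ᵥ φ n x)
    -- `F(x,y) = ∑ n, c n • φ n x ⬝ (φ n y)ᵀ`, converging uniformly, with `F` of class C²
    (F : ℝ → ℝ → Matrix (Fin N) (Fin N) ℝ)
    (hFsum : ∀ x ∈ Set.Icc (0:ℝ) Real.pi, ∀ y ∈ Set.Icc (0:ℝ) Real.pi,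
      HasSum (fun n => c n • Matrix.vecMulVec (φ n x) (φ n y)) (F x y))
    (hFunif : TendstoUniformlyOn
      (fun (s : Finset ℕ) (p : ℝ × ℝ) => ∑ n ∈ s, c n • Matrix.vecMulVec (φ n p.1) (φ n p.2))
      (fun p => F p.1 p.2) Filter.atTop (Set.Icc 0 Real.pi ×ˢ Set.Icc 0 Real.pi))
    (hFC : ContDiff ℝ 2 (Function.uncurry F))
    -- `K` is a continuous solution of the integral equation on the triangle
    (K : ℝ → ℝ → Matrix (Fin N) (Fin N) ℝ)
    (hKcont : ContinuousOn (Function.uncurry K)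
      {p : ℝ × ℝ | 0 ≤ p.2 ∧ p.2 ≤ p.1 ∧ p.1 ≤ Real.pi})
    (hKIE : ∀ x y : ℝ, 0 ≤ y → y ≤ x → x ≤ Real.pi →
      K x y + F x y + (∫ t in (0:ℝ)..x, K x t * F t y) = 0)
    (ψ : ℕ → ℝ → (Fin N → ℝ))
    (hψ : ∀ n x, ψ n x = φ n x + ∫ t in (0:ℝ)..x, K x t *ᵥ φ n t) :
    (∀ x t : ℝ, 0 ≤ t → t ≤ x → x ≤ Real.pi →
      HasSum (fun n => c n • Matrix.vecMulVec (ψ n x) (φ n t)) (-K x t)) ∧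
    (∀ l : ℕ, ∀ x ∈ Set.Icc (0:ℝ) Real.pi,
      HasSum (fun n => (c n * ∫ t in (0:ℝ)..x, φ n t ⬝ᵥ φ l t) • ψ n x)
        (φ l x - ψ l x)) := by
  have hπ : (0:ℝ) ≤ Real.pi := Real.pi_pos.le
  have hTsub : {p : ℝ × ℝ | 0 ≤ p.2 ∧ p.2 ≤ p.1 ∧ p.1 ≤ Real.pi}
      ⊆ Set.Icc 0 Real.pi ×ˢ Set.Icc 0 Real.pi := by
    rintro ⟨x, y⟩ ⟨h1, h2, h3⟩
    exact ⟨⟨h1.trans h2, h3⟩, ⟨h1, h2.trans h3⟩⟩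
  have hTclosed : IsClosed {p : ℝ × ℝ | 0 ≤ p.2 ∧ p.2 ≤ p.1 ∧ p.1 ≤ Real.pi} :=
    (isClosed_le continuous_const continuous_snd).inter
      ((isClosed_le continuous_snd continuous_fst).inter
        (isClosed_le continuous_fst continuous_const))
  have hTcomp : IsCompact {p : ℝ × ℝ | 0 ≤ p.2 ∧ p.2 ≤ p.1 ∧ p.1 ≤ Real.pi} :=
    IsCompact.of_isClosed_subset (isCompact_Icc.prod isCompact_Icc) hTclosed hTsub
  obtain ⟨C₀, hC₀⟩ := hTcomp.exists_bound_of_continuousOn hKcont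
  set CK := max C₀ 0 with hCKdef
  have hCK0 : 0 ≤ CK := le_max_right _ _
  have hKbound : ∀ x y : ℝ, 0 ≤ y → y ≤ x → x ≤ Real.pi → ‖K x y‖ ≤ CK := by
    intro x y h1 h2 h3
    exact (hC₀ (x, y) ⟨h1, h2, h3⟩).trans (le_max_left _ _)
  have hφcont : ∀ n, Continuous (φ n) := fun n => (hφC n).continuous
  have hFcont : Continuous (Function.uncurry F) := hFC.continuous
  have hFcont2 : ∀ t, Continuous (fun u => F u t) := by
    intro t
    exact hFcont.comp (continuous_id.prodMk continuous_const)
  have hKxOn : ∀ x : ℝ, 0 ≤ x → x ≤ Real.pi →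
      ContinuousOn (fun u => K x u) (Set.Icc 0 x) := by
    intro x hx0 hxπ
    have he : (fun u => K x u) = Function.uncurry K ∘ (fun u => (x, u)) := rfl
    rw [he]
    refine hKcont.comp (Continuous.continuousOn (by continuity)) ?_
    intro u hu
    exact ⟨hu.1, hu.2, hxπ⟩
  -- the key uniform convergence statement
  have keyUnif : ∀ x : ℝ, 0 ≤ x → x ≤ Real.pi →
      TendstoUniformlyOn
        (fun (s : Finset ℕ) t => ∑ n ∈ s, c n • Matrix.vecMulVec (ψ n x) (φ n t))
        (fun t => -K x t) Filter.atTop (Set.Icc 0 x) := by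
    intro x hx0 hxπ
    have hKx := hKxOn x hx0 hxπ
    have hKxb : ∀ u ∈ Set.Icc (0:ℝ) x, ‖K x u‖ ≤ CK := fun u hu =>
      hKbound x u hu.1 hu.2 hxπ
    have hIKφ : ∀ n, IntervalIntegrable (fun u => K x u *ᵥ φ n u)
        MeasureTheory.volume 0 x := by
      intro n
      apply ContinuousOn.intervalIntegrable
      rw [Set.uIcc_of_le hx0]
      exact myContinuousOn_mulVec hKx (hφcont n).continuousOn
    -- per-term identity
    have hterm : ∀ (n : ℕ) (t : ℝ), c n • Matrix.vecMulVec (ψ n x) (φ n t)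
        = c n • Matrix.vecMulVec (φ n x) (φ n t)
          + ∫ u in (0:ℝ)..x, K x u * (c n • Matrix.vecMulVec (φ n u) (φ n t)) := by
      intro n t
      have e1 : ∀ u : ℝ, K x u * (c n • Matrix.vecMulVec (φ n u) (φ n t))
          = c n • Matrix.vecMulVec (K x u *ᵥ φ n u) (φ n t) := by
        intro u
        rw [mul_smul_comm, myMul_vecMulVec]
      simp only [e1]
      rw [intervalIntegral.integral_smul]
      have e2 : (∫ u in (0:ℝ)..x, Matrix.vecMulVec (K x u *ᵥ φ n u) (φ n t))
          = Matrix.vecMulVec (∫ u in (0:ℝ)..x, K x u *ᵥ φ n u) (φ n t) := by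
        have h := (vmvCLM (N := N) (φ n t)).intervalIntegral_comp_comm (hIKφ n)
        exact h
      rw [e2, hψ n x, myAdd_vecMulVec, smul_add]
    have hGcont : ∀ (s : Finset ℕ) (t : ℝ), ContinuousOn
        (fun u => K x u * (∑ n ∈ s, c n • Matrix.vecMulVec (φ n u) (φ n t)))
        (Set.Icc 0 x) := by
      intro s t
      apply hKx.mul
      apply continuousOn_finset_sum
      intro n _
      exact (continuous_const.fun_smul
        ((hφcont n).matrix_vecMulVec continuous_const)).continuousOn
    have hIKG : ∀ (s : Finset ℕ) (t : ℝ), @IntervalIntegrable _ PseudoMetricSpace.toUniformSpace.toTopologicalSpace NormedAddGroup.toENormedAddMonoid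
        (fun u => K x u * (∑ n ∈ s, c n • Matrix.vecMulVec (φ n u) (φ n t)))
        MeasureTheory.volume 0 x := by
      intro s t
      apply ContinuousOn.intervalIntegrable
      rw [Set.uIcc_of_le hx0]
      exact hGcont s t
    have hIKg : ∀ (n : ℕ) (t : ℝ), @IntervalIntegrable _ PseudoMetricSpace.toUniformSpace.toTopologicalSpace NormedAddGroup.toENormedAddMonoid
        (fun u => K x u * (c n • Matrix.vecMulVec (φ n u) (φ n t)))
        MeasureTheory.volume 0 x := by
      intro n t
      apply ContinuousOn.intervalIntegrable
      rw [Set.uIcc_of_le hx0]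
      exact hKx.mul (continuous_const.fun_smul
        ((hφcont n).matrix_vecMulVec continuous_const)).continuousOn
    have hIKF : ∀ t : ℝ, @IntervalIntegrable _ PseudoMetricSpace.toUniformSpace.toTopologicalSpace NormedAddGroup.toENormedAddMonoid (fun u => K x u * F u t)
        MeasureTheory.volume 0 x := by
      intro t
      apply ContinuousOn.intervalIntegrable
      rw [Set.uIcc_of_le hx0]
      exact hKx.mul (hFcont2 t).continuousOn
    -- partial sums identity
    have hpartial : ∀ (s : Finset ℕ) (t : ℝ),
        (∑ n ∈ s, c n • Matrix.vecMulVec (ψ n x) (φ n t))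
        = (∑ n ∈ s, c n • Matrix.vecMulVec (φ n x) (φ n t))
          + ∫ u in (0:ℝ)..x, K x u * (∑ n ∈ s, c n • Matrix.vecMulVec (φ n u) (φ n t)) := by
      intro s t
      have e1 : (∫ u in (0:ℝ)..x, K x u * (∑ n ∈ s, c n • Matrix.vecMulVec (φ n u) (φ n t)))
          = ∑ n ∈ s, ∫ u in (0:ℝ)..x, K x u * (c n • Matrix.vecMulVec (φ n u) (φ n t)) := by
        simp only [Finset.mul_sum]
        exact intervalIntegral.integral_finset_sum (fun n _ => hIKg n t)
      rw [e1, ← Finset.sum_add_distrib]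
      exact Finset.sum_congr rfl fun n _ => hterm n t
    -- uniform convergence of the first piece
    have hA : TendstoUniformlyOn
        (fun (s : Finset ℕ) t => ∑ n ∈ s, c n • Matrix.vecMulVec (φ n x) (φ n t))
        (fun t => F x t) Filter.atTop (Set.Icc 0 x) := by
      have hcomp := hFunif.comp (fun t : ℝ => (x, t))
      refine hcomp.mono ?_
      intro t ht
      exact ⟨⟨hx0, hxπ⟩, ht.1, ht.2.trans hxπ⟩
    -- uniform convergence of the second piece
    have hB : TendstoUniformlyOn
        (fun (s : Finset ℕ) t => ∫ u in (0:ℝ)..x,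
          K x u * (∑ n ∈ s, c n • Matrix.vecMulVec (φ n u) (φ n t)))
        (fun t => ∫ u in (0:ℝ)..x, K x u * F u t) Filter.atTop (Set.Icc 0 x) := by
      refine Metric.tendstoUniformlyOn_iff.mpr ?_
      intro ε hε
      set δ := ε / (((N:ℝ) * CK + 1) * (x + 1)) with hδdef
      have hδ : 0 < δ := by positivity
      filter_upwards [Metric.tendstoUniformlyOn_iff.mp hFunif δ hδ] with s hs t ht
      rw [dist_eq_norm, ← intervalIntegral.integral_sub (hIKF t) (hIKG s t)]
      have hb : ∀ u ∈ Set.uIoc (0:ℝ) x,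
          ‖K x u * F u t - K x u * (∑ n ∈ s, c n • Matrix.vecMulVec (φ n u) (φ n t))‖
            ≤ (N:ℝ) * CK * δ := by
        intro u hu
        rw [Set.uIoc_of_le hx0] at hu
        have hu' : u ∈ Set.Icc (0:ℝ) x := ⟨hu.1.le, hu.2⟩
        rw [← mul_sub]
        refine (myNorm_mul_le _ _).trans ?_
        have h1 := hs (u, t) ⟨⟨hu'.1, hu'.2.trans hxπ⟩, ⟨ht.1, ht.2.trans hxπ⟩⟩
        rw [dist_eq_norm] at h1
        have h2 := hKxb u hu'
        exact mul_le_mul (mul_le_mul_of_nonneg_left h2 (by positivity)) h1.le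
          (norm_nonneg _) (by positivity)
      refine lt_of_le_of_lt (intervalIntegral.norm_integral_le_of_norm_le_const hb) ?_
      rw [sub_zero, abs_of_nonneg hx0]
      have hkey : (N:ℝ) * CK * x < ((N:ℝ) * CK + 1) * (x + 1) := by nlinarith [hCK0, hx0, Nat.cast_nonneg (α := ℝ) N]
      calc (N:ℝ) * CK * δ * x = δ * ((N:ℝ) * CK * x) := by ring
        _ < δ * (((N:ℝ) * CK + 1) * (x + 1)) := by
            exact mul_lt_mul_of_pos_left hkey hδ
        _ = ε := by
            rw [hδdef, div_mul_cancel₀ _ (by positivity)]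
    -- combine
    have hAB2 := hA.add hB
    refine (hAB2.congr (Filter.Eventually.of_forall fun s t _ =>
      (hpartial s t).symm)).congr_right ?_
    intro t ht
    have h := hKIE x t ht.1 ht.2 hxπ
    show F x t + (∫ u in (0:ℝ)..x, K x u * F u t) = -K x t
    have h2 : (F x t + ∫ u in (0:ℝ)..x, K x u * F u t) + K x t = 0 := by
      rw [add_comm, ← add_assoc]
      exact h
    exact eq_neg_of_add_eq_zero_left h2
  constructor
  · intro x t ht0 htx hxπ
    exact (keyUnif x (ht0.trans htx) hxπ).tendsto_at (⟨ht0, htx⟩ : t ∈ Set.Icc 0 x)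
  · intro l x hx
    obtain ⟨hx0, hxπ⟩ := hx
    have hU := keyUnif x hx0 hxπ
    obtain ⟨Cφ₀, hCφ₀⟩ := (isCompact_Icc :
      IsCompact (Set.Icc (0:ℝ) Real.pi)).exists_bound_of_continuousOn
      (hφcont l).continuousOn
    set Cφ := max Cφ₀ 0 with hCφdef
    have hCφ0 : 0 ≤ Cφ := le_max_right _ _
    have hCφ : ∀ u ∈ Set.Icc (0:ℝ) x, ‖φ l u‖ ≤ Cφ := fun u hu =>
      (hCφ₀ u ⟨hu.1, hu.2.trans hxπ⟩).trans (le_max_left _ _)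
    have hUv := myTUO_mulVec hCφ0 hCφ hU
    have hKx := hKxOn x hx0 hxπ
    have hlim : Tendsto (fun s : Finset ℕ => ∫ t in (0:ℝ)..x,
        (∑ n ∈ s, c n • Matrix.vecMulVec (ψ n x) (φ n t)) *ᵥ φ l t) Filter.atTop
        (nhds (∫ t in (0:ℝ)..x, (-K x t) *ᵥ φ l t)) := by
      refine myTendsto_intervalIntegral hx0 ?_ ?_ hUv
      · intro s
        apply ContinuousOn.intervalIntegrable
        rw [Set.uIcc_of_le hx0]
        apply Continuous.continuousOn
        refine Continuous.matrix_mulVec ?_ (hφcont l)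
        exact continuous_finset_sum _ fun n _ =>
          continuous_const.fun_smul (continuous_const.matrix_vecMulVec (hφcont n))
      · apply ContinuousOn.intervalIntegrable
        rw [Set.uIcc_of_le hx0]
        exact myContinuousOn_mulVec hKx.neg (hφcont l).continuousOn
    have e2 : ∀ (s : Finset ℕ) (t : ℝ),
        (∑ n ∈ s, c n • Matrix.vecMulVec (ψ n x) (φ n t)) *ᵥ φ l t
        = ∑ n ∈ s, (c n * (φ n t ⬝ᵥ φ l t)) • ψ n x := by
      intro s t
      rw [mySum_mulVec]
      refine Finset.sum_congr rfl fun n _ => ?_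
      rw [Matrix.smul_mulVec, myVecMulVec_mulVec, smul_smul]
    have e1 : ∀ s : Finset ℕ,
        (∫ t in (0:ℝ)..x, (∑ n ∈ s, c n • Matrix.vecMulVec (ψ n x) (φ n t)) *ᵥ φ l t)
        = ∑ n ∈ s, (c n * ∫ t in (0:ℝ)..x, φ n t ⬝ᵥ φ l t) • ψ n x := by
      intro s
      simp only [e2]
      rw [intervalIntegral.integral_finset_sum]
      · refine Finset.sum_congr rfl fun n _ => ?_
        rw [intervalIntegral.integral_smul_const, intervalIntegral.integral_const_mul]
      · intro n _
        apply ContinuousOn.intervalIntegrable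
        exact (Continuous.fun_smul (continuous_const.mul
          ((hφcont n).dotProduct (hφcont l))) continuous_const).continuousOn
    have e3 : (∫ t in (0:ℝ)..x, (-K x t) *ᵥ φ l t) = φ l x - ψ l x := by
      have hneg : ∀ t : ℝ, (-K x t) *ᵥ φ l t = -(K x t *ᵥ φ l t) := fun t =>
        Matrix.neg_mulVec _ _
      simp only [hneg]
      rw [intervalIntegral.integral_neg, hψ l x]
      abel
    have hlim2 : Tendsto (fun s : Finset ℕ =>
        ∑ n ∈ s, (c n * ∫ t in (0:ℝ)..x, φ n t ⬝ᵥ φ l t) • ψ n x) Filter.atTop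
        (nhds (φ l x - ψ l x)) := by
      rw [← e3]
      exact hlim.congr e1
    exact hlim2
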